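/- Fix 1 ≤ p ≤ 2 and an integer k ≥ 1, and set n = 2k. In the space ℓ_p^n (i.e. ℝ^n with the norm ‖x‖_p = (∑_{i=1}^n |x_i|^p)^{1/p}), let S = {e_1, …, e_n} be the set of standard basis vectors and let a = (1/n, …, 1/n). Then a ∈ conv S and dist(a, conv_k S) ≥ (1/4)·k^{1/p − 1}, where the distance is taken in the ℓ_p norm. -/

import Mathlib

open scoped ENNReal

def convHullK {X : Type*} [NormedAddCommGroup X] [NormedSpace ℝ X] (k : ℕ) (S : Set X) :
    Set X :=
  ⋃ (F : Finset X) (_ : ↑F ⊆ S) (_ : F.card ≤ k), convexHull ℝ (F : Set X)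

theorem lp_lower_bound (p : ℝ≥0∞) [Fact (1 ≤ p)] (hp2 : p ≤ 2) (k : ℕ) (hk : 1 ≤ k) :
    ∀ (S : Set (PiLp p (fun _ : Fin (2 * k) => ℝ)))
      (a : PiLp p (fun _ : Fin (2 * k) => ℝ)),
      S = {x | ∃ i : Fin (2 * k), x = (WithLp.equiv p (∀ _ : Fin (2 * k), ℝ)).symm
              (Pi.single i 1)} →
      a = (WithLp.equiv p (∀ _ : Fin (2 * k), ℝ)).symm (fun _ => 1 / (2 * k : ℝ)) →
      a ∈ convexHull ℝ S ∧
        (1 / 4 : ℝ) * (k : ℝ) ^ (1 / p.toReal - 1) ≤ Metric.infDist a (convHullK k S) := by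
  intro S a hS ha
  classical
  have hp1 : (1 : ℝ≥0∞) ≤ p := Fact.out
  have hpt : p ≠ ∞ := fun h => by simp [h] at hp2
  have hq1 : (1 : ℝ) ≤ p.toReal := by
    have := ENNReal.toReal_mono hpt hp1
    simpa using this
  set q := p.toReal with hqdef
  have hq0 : 0 < q := lt_of_lt_of_le one_pos hq1
  have hkpos : (0 : ℝ) < k := by exact_mod_cast hk
  have hnpos : (0 : ℝ) < 2 * k := by linarith
  set e : Fin (2 * k) → PiLp p (fun _ : Fin (2 * k) => ℝ) :=
    fun i => (WithLp.equiv p (∀ _ : Fin (2 * k), ℝ)).symm (Pi.single i 1) with he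
  -- a is the average of the e i
  have haS : a ∈ convexHull ℝ S := by
    have hsum : a = ∑ i : Fin (2 * k), (1 / (2 * k : ℝ)) • e i := by
      set L := WithLp.linearEquiv p ℝ (∀ _ : Fin (2 * k), ℝ) with hL
      have heL : ∀ i, e i = L.symm (Pi.single i 1) := fun i => rfl
      have haL : a = L.symm (fun _ => 1 / (2 * k : ℝ)) := by rw [ha]; rfl
      rw [haL]
      simp only [heL, ← map_smul, ← map_sum]
      congr 1
      funext j
      rw [Finset.sum_apply]
      rw [Finset.sum_eq_single j]
      · simp
      · intro i _ hij
        simp [Pi.single_eq_of_ne' hij]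
      · simp
    rw [hsum]
    refine (convex_convexHull ℝ S).sum_mem (fun i _ => by positivity) ?_ ?_
    · rw [Finset.sum_const, Finset.card_univ, Fintype.card_fin]
      rw [nsmul_eq_mul]; push_cast
      field_simp
    · intro i _
      exact subset_convexHull ℝ S (by rw [hS]; exact ⟨i, rfl⟩)
  refine ⟨haS, ?_⟩
  -- nonemptiness of convHullK
  have hne : (convHullK k S).Nonempty := by
    refine ⟨e ⟨0, by omega⟩, ?_⟩
    refine Set.mem_iUnion.2 ⟨{e ⟨0, by omega⟩}, Set.mem_iUnion.2 ⟨?_, Set.mem_iUnion.2 ⟨?_, ?_⟩⟩⟩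
    · intro x hx
      simp only [Finset.coe_singleton, Set.mem_singleton_iff] at hx
      rw [hS, hx]; exact ⟨_, rfl⟩
    · simpa using hk
    · exact subset_convexHull ℝ _ (by simp)
  -- main distance bound
  have hmain : ∀ x ∈ convHullK k S,
      (1 / 4 : ℝ) * (k : ℝ) ^ (1 / q - 1) ≤ dist a x := by
    intro x hx
    rcases Set.mem_iUnion.1 hx with ⟨F, hF⟩
    rcases Set.mem_iUnion.1 hF with ⟨hFS, hF'⟩
    rcases Set.mem_iUnion.1 hF' with ⟨hFk, hxF⟩
    set T : Finset (Fin (2 * k)) := Finset.univ.filter (fun i => e i ∈ F) with hT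
    have hTk : T.card ≤ k := by
      refine le_trans ?_ hFk
      apply Finset.card_le_card_of_injOn (f := e)
      · intro i hi; simpa [hT] using (Finset.mem_filter.1 hi).2
      · intro i _ j _ hij
        have : (Pi.single i 1 : ∀ _ : Fin (2 * k), ℝ) = Pi.single j 1 := by
          exact congrArg (WithLp.equiv p (∀ _ : Fin (2 * k), ℝ)) hij
        by_contra hne'
        have := congrFun this i
        simp [Pi.single_eq_of_ne' (Ne.symm hne'), Pi.single_eq_same] at this
    -- support of x
    have hsupp : ∀ i ∉ T, x i = 0 := by
      intro i hi
      have hconv : convexHull ℝ (F : Set _) ⊆ {y : PiLp p (fun _ : Fin (2 * k) => ℝ) | y i = 0} := by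
        apply convexHull_min
        · intro y hy
          rcases hS ▸ hFS hy with ⟨j, rfl⟩
          have hji : j ≠ i := by
            rintro rfl
            exact hi (Finset.mem_filter.2 ⟨Finset.mem_univ j, hy⟩)
          simp only [Set.mem_setOf_eq, WithLp.equiv_symm_apply, PiLp.toLp_apply]
          exact Pi.single_eq_of_ne' hji 1
        · intro y hy z hz s t hs ht hst
          simp only [Set.mem_setOf_eq] at hy hz ⊢
          show s * y i + t * z i = 0
          rw [hy, hz]; ring
      exact hconv hxF
    -- compute the norm from below
    have hdexpand : ∀ i ∉ T, ‖(a - x) i‖ = 1 / (2 * k : ℝ) := by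
      intro i hi
      have : (a - x) i = a i - x i := rfl
      rw [this, hsupp i hi, ha, WithLp.equiv_symm_apply, PiLp.toLp_apply]
      simp only [sub_zero]
      rw [Real.norm_eq_abs, abs_of_pos (by positivity)]
    have hnorm : ‖a - x‖ = (∑ i : Fin (2 * k), ‖(a - x) i‖ ^ q) ^ (1 / q) := by
      exact PiLp.norm_eq_sum hq0 _
    have hsumlb : (k : ℝ) * (1 / (2 * k : ℝ)) ^ q ≤ ∑ i : Fin (2 * k), ‖(a - x) i‖ ^ q := by
      have h1 : ∑ i ∈ Tᶜ, ‖(a - x) i‖ ^ q ≤ ∑ i : Fin (2 * k), ‖(a - x) i‖ ^ q := by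
        apply Finset.sum_le_sum_of_subset_of_nonneg (Finset.subset_univ _)
        intro i _ _
        positivity
      have h2 : ∑ i ∈ Tᶜ, ‖(a - x) i‖ ^ q = (Tᶜ.card : ℝ) * (1 / (2 * k : ℝ)) ^ q := by
        rw [Finset.sum_congr rfl (fun i hi => by
          rw [hdexpand i (Finset.mem_compl.1 hi)])]
        rw [Finset.sum_const, nsmul_eq_mul]
      have h3 : (k : ℝ) ≤ (Tᶜ.card : ℝ) := by
        have : Tᶜ.card = 2 * k - T.card := by
          rw [Finset.card_compl, Fintype.card_fin]
        rw [this]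
        have : k ≤ 2 * k - T.card := by omega
        exact_mod_cast this
      calc (k : ℝ) * (1 / (2 * k : ℝ)) ^ q ≤ (Tᶜ.card : ℝ) * (1 / (2 * k : ℝ)) ^ q := by
            apply mul_le_mul_of_nonneg_right h3; positivity
        _ = ∑ i ∈ Tᶜ, ‖(a - x) i‖ ^ q := h2.symm
        _ ≤ _ := h1
    have hrb : ((k : ℝ) * (1 / (2 * k : ℝ)) ^ q) ^ (1 / q) ≤ ‖a - x‖ := by
      rw [hnorm]
      apply Real.rpow_le_rpow (by positivity) hsumlb (by positivity)
    have hcalc : ((k : ℝ) * (1 / (2 * k : ℝ)) ^ q) ^ (1 / q)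
        = (1 / 2 : ℝ) * (k : ℝ) ^ (1 / q - 1) := by
      rw [Real.mul_rpow (le_of_lt hkpos) (by positivity),
        ← Real.rpow_mul (by positivity : (0:ℝ) ≤ 1 / (2 * k)),
        mul_one_div_cancel (ne_of_gt hq0), Real.rpow_one,
        Real.rpow_sub hkpos, Real.rpow_one]
      field_simp
    have hdist : dist a x = ‖a - x‖ := dist_eq_norm a x
    calc (1 / 4 : ℝ) * (k : ℝ) ^ (1 / q - 1)
        ≤ (1 / 2 : ℝ) * (k : ℝ) ^ (1 / q - 1) := by
          apply mul_le_mul_of_nonneg_right (by norm_num) (Real.rpow_nonneg hkpos.le _)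
      _ = ((k : ℝ) * (1 / (2 * k : ℝ)) ^ q) ^ (1 / q) := hcalc.symm
      _ ≤ ‖a - x‖ := hrb
      _ = dist a x := hdist.symm
  by_contra hlt
  push_neg at hlt
  rcases (Metric.infDist_lt_iff hne).1 hlt with ⟨y, hy, hdy⟩
  exact absurd hdy (not_lt.2 (hmain y hy))
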